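/- Let G be a graph of maximum degree Δ and let ε < 1/5. Call an edge uv a friend edge if |N(u) ∩ N(v)| ≥ (1-ε)Δ, and call a vertex dense if it has at least (1-ε)Δ neighbors joined to it by friend edges. If x and y are dense vertices connected by a path of friend edges all of whose vertices are dense, then |N(x) ∩ N(y)| ≥ (1-2ε)Δ. -/

import Mathlib

open Finset

attribute [local instance] Classical.propDecidable

variable {V : Type*}

/-- `uv` is a friend edge: they are adjacent and share at least `(1-ε)Δ` neighbors. -/
def friendAdj [Fintype V] [DecidableEq V] (G : SimpleGraph V) [DecidableRel G.Adj]
    (Δ : ℕ) (ε : ℝ) (u v : V) : Prop :=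
  G.Adj u v ∧ (1 - ε) * (Δ : ℝ) ≤ ((G.neighborFinset u ∩ G.neighborFinset v).card : ℝ)

/-- The friends of `v`. -/
noncomputable def friends [Fintype V] [DecidableEq V] (G : SimpleGraph V) [DecidableRel G.Adj]
    (Δ : ℕ) (ε : ℝ) (v : V) : Finset V :=
  Finset.univ.filter (fun w => friendAdj G Δ ε v w)

/-- `v` is dense: it has at least `(1-ε)Δ` friends. -/
def isDense [Fintype V] [DecidableEq V] (G : SimpleGraph V) [DecidableRel G.Adj]
    (Δ : ℕ) (ε : ℝ) (v : V) : Prop :=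
  (1 - ε) * (Δ : ℝ) ≤ ((friends G Δ ε v).card : ℝ)

/-- The graph on dense vertices whose edges are the friend edges; its connected
components are the almost-cliques. -/
def friendGraph [Fintype V] [DecidableEq V] (G : SimpleGraph V) [DecidableRel G.Adj]
    (Δ : ℕ) (ε : ℝ) : SimpleGraph V where
  Adj u v := friendAdj G Δ ε u v ∧ isDense G Δ ε u ∧ isDense G Δ ε v
  symm := ⟨by
    rintro u v ⟨⟨hadj, hcard⟩, hu, hv⟩
    exact ⟨⟨hadj.symm, by rwa [Finset.inter_comm]⟩, hv, hu⟩⟩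
  loopless := ⟨fun v h => G.irrefl h.1.1⟩


private lemma tri_lemma [Fintype V] [DecidableEq V] (G : SimpleGraph V) [DecidableRel G.Adj]
    (Δ : ℕ) (hΔ : ∀ w, G.degree w ≤ Δ) (a b c : V) :
    ((G.neighborFinset a ∩ G.neighborFinset b).card : ℝ)
      + ((G.neighborFinset b ∩ G.neighborFinset c).card : ℝ) - Δ
      ≤ ((G.neighborFinset a ∩ G.neighborFinset c).card : ℝ) := by
  set A := G.neighborFinset a ∩ G.neighborFinset b
  set C := G.neighborFinset b ∩ G.neighborFinset c
  have hsub : A ∩ C ⊆ G.neighborFinset a ∩ G.neighborFinset c := by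
    intro z hz; simp only [A, C, mem_inter] at *; tauto
  have hsub2 : A ∪ C ⊆ G.neighborFinset b := by
    intro z hz; simp only [A, C, mem_union, mem_inter] at *; tauto
  have h1 := Finset.card_inter_add_card_union A C
  have h2 := Finset.card_le_card hsub2
  have h3 := Finset.card_le_card hsub
  have hd : (G.neighborFinset b).card ≤ Δ := by
    rw [G.card_neighborFinset_eq_degree]; exact hΔ b
  have : A.card + C.card ≤ (G.neighborFinset a ∩ G.neighborFinset c).card + Δ := by omega
  have hcast : ((A.card : ℝ) + (C.card : ℝ)
      ≤ ((G.neighborFinset a ∩ G.neighborFinset c).card : ℝ) + (Δ : ℝ)) := by exact_mod_cast this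
  linarith

private lemma friends_subset [Fintype V] [DecidableEq V] (G : SimpleGraph V) [DecidableRel G.Adj]
    (Δ : ℕ) (ε : ℝ) (v : V) : friends G Δ ε v ⊆ G.neighborFinset v := by
  intro w hw
  simp only [friends, mem_filter] at hw
  exact (G.mem_neighborFinset v w).mpr hw.2.1

private lemma boost [Fintype V] [DecidableEq V] (G : SimpleGraph V) [DecidableRel G.Adj]
    (Δ : ℕ) (ε : ℝ) (hΔ : ∀ w, G.degree w ≤ Δ) (hε0 : 0 < ε) (hε : ε < 1/5)
    (u w : V) (hu : isDense G Δ ε u) (hw : isDense G Δ ε w)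
    (h : (1 - 3*ε) * (Δ : ℝ) ≤ ((G.neighborFinset u ∩ G.neighborFinset w).card : ℝ)) :
    (1 - 2*ε) * (Δ : ℝ) ≤ ((G.neighborFinset u ∩ G.neighborFinset w).card : ℝ) := by
  rcases Nat.eq_zero_or_pos Δ with hΔ0 | hΔ0
  · subst hΔ0; simpa using (Nat.cast_nonneg _ : (0:ℝ) ≤ _)
  have hΔR : (0:ℝ) < Δ := by exact_mod_cast hΔ0
  -- there is a common friend f of u and w
  have hdu : (G.neighborFinset u).card ≤ Δ := by
    rw [G.card_neighborFinset_eq_degree]; exact hΔ u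
  have hdw' : (G.neighborFinset w).card ≤ Δ := by
    rw [G.card_neighborFinset_eq_degree]; exact hΔ w
  have hUsub : friends G Δ ε u ∪ friends G Δ ε w ⊆ G.neighborFinset u ∪ G.neighborFinset w := by
    exact Finset.union_subset_union (friends_subset G Δ ε u) (friends_subset G Δ ε w)
  have hcu := Finset.card_inter_add_card_union (G.neighborFinset u) (G.neighborFinset w)
  have hcf := Finset.card_inter_add_card_union (friends G Δ ε u) (friends G Δ ε w)
  have hUle := Finset.card_le_card hUsub
  have hpos : (0:ℝ) < ((friends G Δ ε u ∩ friends G Δ ε w).card : ℝ) := by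
    have e1 : ((friends G Δ ε u ∩ friends G Δ ε w).card : ℝ)
        + ((friends G Δ ε u ∪ friends G Δ ε w).card : ℝ)
        = ((friends G Δ ε u).card : ℝ) + ((friends G Δ ε w).card : ℝ) := by
      exact_mod_cast congrArg (Nat.cast (R := ℝ)) hcf
    have e2 : ((G.neighborFinset u ∩ G.neighborFinset w).card : ℝ)
        + ((G.neighborFinset u ∪ G.neighborFinset w).card : ℝ)
        = ((G.neighborFinset u).card : ℝ) + ((G.neighborFinset w).card : ℝ) := by
      exact_mod_cast congrArg (Nat.cast (R := ℝ)) hcu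
    have e3 : ((friends G Δ ε u ∪ friends G Δ ε w).card : ℝ)
        ≤ ((G.neighborFinset u ∪ G.neighborFinset w).card : ℝ) := by exact_mod_cast hUle
    have hduR : ((G.neighborFinset u).card : ℝ) ≤ Δ := by exact_mod_cast hdu
    have hdwR : ((G.neighborFinset w).card : ℝ) ≤ Δ := by exact_mod_cast hdw'
    have hu' : (1 - ε) * (Δ : ℝ) ≤ ((friends G Δ ε u).card : ℝ) := hu
    have hw' : (1 - ε) * (Δ : ℝ) ≤ ((friends G Δ ε w).card : ℝ) := hw
    nlinarith
  obtain ⟨f, hf⟩ := Finset.card_pos.mp (by exact_mod_cast hpos)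
  rw [Finset.mem_inter] at hf
  have hfu : (1 - ε) * (Δ : ℝ) ≤ ((G.neighborFinset u ∩ G.neighborFinset f).card : ℝ) := by
    have := (mem_filter.mp hf.1).2.2
    rwa [Finset.inter_comm] at this ⊢
  have hfw : (1 - ε) * (Δ : ℝ) ≤ ((G.neighborFinset f ∩ G.neighborFinset w).card : ℝ) := by
    have := (mem_filter.mp hf.2).2.2
    rwa [Finset.inter_comm] at this
  have := tri_lemma G Δ hΔ u f w
  linarith

/-- If `x` and `y` are dense vertices connected by a path of friend edges all of whose
vertices are dense, then `|N(x) ∩ N(y)| ≥ (1-2ε)Δ`. -/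
theorem stmt_0 [Fintype V] [DecidableEq V] (G : SimpleGraph V) [DecidableRel G.Adj]
    (Δ : ℕ) (ε : ℝ) (hΔ : ∀ w, G.degree w ≤ Δ) (hε0 : 0 < ε) (hε : ε < 1/5)
    (x y : V) (hx : isDense G Δ ε x) (hy : isDense G Δ ε y)
    (hreach : (friendGraph G Δ ε).Reachable x y) :
    (1 - 2*ε) * (Δ : ℝ) ≤ ((G.neighborFinset x ∩ G.neighborFinset y).card : ℝ) := by
  rcases Nat.eq_zero_or_pos Δ with hΔ0 | hΔ0
  · subst hΔ0; simpa using (Nat.cast_nonneg _ : (0:ℝ) ≤ _)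
  have hΔR : (0:ℝ) < Δ := by exact_mod_cast hΔ0
  suffices H : ∀ v (p : (friendGraph G Δ ε).Walk v y),
      isDense G Δ ε v →
      (1 - 2*ε) * (Δ : ℝ) ≤ ((G.neighborFinset x ∩ G.neighborFinset v).card : ℝ) →
      (1 - 2*ε) * (Δ : ℝ) ≤ ((G.neighborFinset x ∩ G.neighborFinset y).card : ℝ) by
    obtain ⟨p⟩ := hreach
    apply H x p hx
    have hbase : (1 - ε) * (Δ : ℝ) ≤ ((G.neighborFinset x).card : ℝ) := by
      have := Finset.card_le_card (friends_subset G Δ ε x)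
      have : ((friends G Δ ε x).card : ℝ) ≤ ((G.neighborFinset x).card : ℝ) := by
        exact_mod_cast this
      have hx' : (1 - ε) * (Δ : ℝ) ≤ ((friends G Δ ε x).card : ℝ) := hx
      linarith
    rw [Finset.inter_self]
    nlinarith
  intro v p
  clear hreach hy
  induction p with
  | nil => intro _ h; exact h
  | @cons v w _ h p ih =>
    intro hdv hinv
    obtain ⟨⟨hadj, hcard⟩, _, hdw⟩ := h
    apply ih hdw
    apply boost G Δ ε hΔ hε0 hε x w hx hdw
    have := tri_lemma G Δ hΔ x v w
    linarith
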